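/- Let λ be a nonzero complex root of a monic polynomial with integer coefficients, and suppose all complex roots of this polynomial lie in the closed unit disc {z ∈ ℂ : |z| ≤ 1}. Then λ is a root of unity. -/

import Mathlib

open Polynomial

private lemma multiset_prod_le_one_aux (s : Multiset ℝ) (h : ∀ x ∈ s, 0 ≤ x ∧ x ≤ 1) :
    s.prod ≤ 1 := by
  induction s using Multiset.induction_on with
  | empty => simp
  | cons a s ih =>
    rw [Multiset.prod_cons]
    have ha := h a (Multiset.mem_cons_self a s)
    have hs := ih fun x hx => h x (Multiset.mem_cons_of_mem hx)
    have h0 : 0 ≤ s.prod := Multiset.prod_nonneg fun x hx => (h x (Multiset.mem_cons_of_mem hx)).1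
    calc a * s.prod ≤ 1 * 1 := mul_le_mul ha.2 hs h0 zero_le_one
    _ = 1 := by ring

/-- Kronecker's theorem: a nonzero root of a monic integer polynomial all of whose
complex roots lie in the closed unit disc is a root of unity. -/
theorem kronecker_root_of_unity (p : Polynomial ℤ) (hp : p.Monic)
    (hroots : ∀ z : ℂ, Polynomial.aeval z p = 0 → ‖z‖ ≤ 1)
    (lam : ℂ) (hlam0 : lam ≠ 0) (hlam : Polynomial.aeval lam p = 0) :
    ∃ n : ℕ, 0 < n ∧ lam ^ n = 1 := by
  have hint : IsIntegral ℤ lam := ⟨p, hp, hlam⟩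
  have halg : IsIntegral ℚ lam := hint.tower_top
  set q : ℚ[X] := minpoly ℚ lam with hq
  have hqmonic : q.Monic := minpoly.monic halg
  have hqdvd : q ∣ p.map (algebraMap ℤ ℚ) := by
    apply minpoly.dvd
    rw [aeval_map_algebraMap]
    exact hlam
  have hqroot : ∀ z : ℂ, Polynomial.aeval z q = 0 → ‖z‖ ≤ 1 := by
    intro z hz
    apply hroots
    obtain ⟨r, hr⟩ := hqdvd
    have : Polynomial.aeval z (p.map (algebraMap ℤ ℚ)) = 0 := by
      rw [hr, map_mul, hz, zero_mul]
    rwa [aeval_map_algebraMap] at this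
  -- the map of q to ℂ
  set qc : ℂ[X] := q.map (algebraMap ℚ ℂ) with hqc
  have hqcmonic : qc.Monic := hqmonic.map _
  have hqc0 : qc ≠ 0 := hqcmonic.ne_zero
  have hsplits : Splits qc :=
    IsAlgClosed.splits qc
  have hroot_mem : ∀ z ∈ qc.roots, ‖z‖ ≤ 1 := by
    intro z hz
    apply hqroot
    have := isRoot_of_mem_roots hz
    rwa [IsRoot, hqc, eval_map, ← aeval_def] at this
  -- constant coefficient
  have hc0q : q.coeff 0 ≠ 0 := minpoly.coeff_zero_ne_zero halg hlam0
  have hqeq : q = (minpoly ℤ lam).map (algebraMap ℤ ℚ) :=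
    minpoly.isIntegrallyClosed_eq_field_fractions' ℚ hint
  have hc0int : (minpoly ℤ lam).coeff 0 ≠ 0 := by
    intro h
    apply hc0q
    rw [hqeq, coeff_map, h, map_zero]
  have habs_c0 : 1 ≤ ‖qc.coeff 0‖ := by
    rw [hqc, coeff_map, hqeq, coeff_map]
    have : ((algebraMap ℚ ℂ) ((algebraMap ℤ ℚ) ((minpoly ℤ lam).coeff 0)))
        = (((minpoly ℤ lam).coeff 0 : ℤ) : ℂ) := by rfl
    rw [this, Complex.norm_intCast]
    exact_mod_cast Int.one_le_abs (by exact_mod_cast hc0int)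
  -- product of absolute values of roots is ≥ 1
  have hprod : 1 ≤ (qc.roots.map (fun z : ℂ => ‖z‖)).prod := by
    have := hsplits.coeff_zero_eq_prod_roots_of_monic hqcmonic
    have habs : ‖qc.roots.prod‖ = (qc.roots.map (fun z : ℂ => ‖z‖)).prod := by
      exact (map_multiset_prod (normHom : ℂ →*₀ ℝ) qc.roots).trans rfl
    calc (1 : ℝ) ≤ ‖qc.coeff 0‖ := habs_c0
    _ = ‖qc.roots.prod‖ := by rw [this]; simp
    _ = _ := habs
  -- hence every root has absolute value exactly 1
  have hroot_one : ∀ z : ℂ, Polynomial.aeval z q = 0 → ‖z‖ = 1 := by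
    intro z hz
    have hzmem : z ∈ qc.roots := by
      rw [mem_roots hqc0, IsRoot, hqc, eval_map, ← aeval_def]
      exact hz
    have h1 : ‖z‖ ≤ 1 := hqroot z hz
    refine le_antisymm h1 ?_
    obtain ⟨t, ht⟩ := Multiset.exists_cons_of_mem (Multiset.mem_map_of_mem (fun z : ℂ => ‖z‖) hzmem)
    rw [ht, Multiset.prod_cons] at hprod
    have htle : t.prod ≤ 1 := by
      apply multiset_prod_le_one_aux
      intro x hx
      have hxmem : x ∈ qc.roots.map (fun z : ℂ => ‖z‖) := ht ▸ Multiset.mem_cons_of_mem hx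
      obtain ⟨w, hw, rfl⟩ := Multiset.mem_map.1 hxmem
      exact ⟨norm_nonneg _, hroot_mem w hw⟩
    have h0t : 0 ≤ t.prod := Multiset.prod_nonneg fun x hx => by
      have hxmem : x ∈ qc.roots.map (fun z : ℂ => ‖z‖) := ht ▸ Multiset.mem_cons_of_mem hx
      obtain ⟨w, hw, rfl⟩ := Multiset.mem_map.1 hxmem
      exact norm_nonneg _
    nlinarith [norm_nonneg z]
  -- now pass to the number field ℚ⟮lam⟯
  let K := IntermediateField.adjoin ℚ ({lam} : Set ℂ)
  haveI : FiniteDimensional ℚ K := IntermediateField.adjoin.finiteDimensional halg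
  haveI : NumberField K := ⟨⟩
  set x : K := IntermediateField.AdjoinSimple.gen ℚ lam with hx
  have hxcoe : (x : ℂ) = lam := IntermediateField.AdjoinSimple.coe_gen ℚ lam
  have hxint : IsIntegral ℤ x := by
    refine ⟨p, hp, ?_⟩
    have hinj : Function.Injective (algebraMap K ℂ) := (algebraMap K ℂ).injective
    apply hinj
    rw [map_zero, ← aeval_def, ← aeval_algebraMap_apply]
    rw [show (algebraMap K ℂ) x = lam from hxcoe]
    exact hlam
  have hminx : minpoly ℚ x = q := IntermediateField.minpoly_gen ℚ lam
  have hnorm : ∀ φ : K →+* ℂ, ‖φ x‖ = 1 := by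
    intro φ
    have : Polynomial.aeval (φ x) q = 0 := by
      rw [← hminx]
      have := aeval_algHom_apply φ.toRatAlgHom x (minpoly ℚ x)
      rw [minpoly.aeval, map_zero] at this
      rw [← this]
      rfl
    exact hroot_one (φ x) this
  obtain ⟨n, hn, hxn⟩ := NumberField.Embeddings.pow_eq_one_of_norm_eq_one K ℂ hxint hnorm
  refine ⟨n, hn, ?_⟩
  have : ((x ^ n : K) : ℂ) = ((1 : K) : ℂ) := by rw [hxn]
  push_cast at this
  rwa [hxcoe] at this
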